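/- Let μ, ν be σ-additive finite measures and for each α ∈ ℚ≥0 let A_α be a positive set of μ − α·ν with A_αᶜ a negative set, the family {A_α} decreasing with A_0 = U. Then μ ≪ ν (ν(A)=0 implies μ(A)=0) if and only if lim_{α→∞} max(μ(A_α), ν(A_α)) = 0. -/

import Mathlib

open MeasureTheory Filter Set
open scoped NNReal ENNReal NNRat

variable {U : Type*}

/-- The Choquet integral of `f` w.r.t. the set function `ν` on the set `A`:
`∫₀^∞ ν({f ≥ t} ∩ A) dt`. -/
noncomputable def Choquet [MeasurableSpace U] (ν : Set U → ENNReal) (f : U → ENNReal)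
    (A : Set U) : ENNReal :=
  ∫⁻ t in Set.Ioi (0 : ℝ), ν ({x | ENNReal.ofReal t ≤ f x} ∩ A)

/-- A monotone measure: vanishes at `∅` and is monotone on measurable sets. -/
def IsMonotoneMeasure [MeasurableSpace U] (ν : Set U → ENNReal) : Prop :=
  ν ∅ = 0 ∧ ∀ A B : Set U, MeasurableSet A → MeasurableSet B → A ⊆ B → ν A ≤ ν B

/-- The decomposition inequalities for the ordered pair `(μ, ν)` w.r.t. a family
`A : NNRat → Set U`, stated additively (no truncated subtraction):
`α(ν(S∩A_α) − ν(S∩A_β)) ≤ μ(S∩A_α) − μ(S∩A_β) ≤ β(ν(S∩A_α) − ν(S∩A_β))`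
for all measurable `S` of finite `μ`- and `ν`-measure and rationals `α < β`. -/
def DecompIneq [MeasurableSpace U] (μ ν : Set U → ENNReal) (A : NNRat → Set U) : Prop :=
  ∀ S : Set U, MeasurableSet S → μ S ≠ ⊤ → ν S ≠ ⊤ →
    ∀ α β : NNRat, α < β →
      (((α : ℝ≥0) : ENNReal) * ν (S ∩ A α) + μ (S ∩ A β)
          ≤ μ (S ∩ A α) + ((α : ℝ≥0) : ENNReal) * ν (S ∩ A β)) ∧
      (μ (S ∩ A α) + ((β : ℝ≥0) : ENNReal) * ν (S ∩ A β)
          ≤ ((β : ℝ≥0) : ENNReal) * ν (S ∩ A α) + μ (S ∩ A β))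

/-- The decomposition property: a decreasing family of measurable sets with `A 0 = univ`
satisfying the decomposition inequalities. -/
def DecompProp [MeasurableSpace U] (μ ν : Set U → ENNReal) (A : NNRat → Set U) : Prop :=
  (∀ α, MeasurableSet (A α)) ∧ A 0 = Set.univ ∧ Antitone A ∧ DecompIneq μ ν A

/-- Comonotonicity for `ℝ≥0∞`-valued functions. -/
def Comonotone (f g : U → ENNReal) : Prop :=
  ∀ s t : U, (f s ≤ f t ∧ g s ≤ g t) ∨ (f t ≤ f s ∧ g t ≤ g s)

theorem abs_continuous_iff_tendsto [MeasurableSpace U] (μ ν : Measure U)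
    [IsFiniteMeasure μ] [IsFiniteMeasure ν]
    (A : NNRat → Set U) (hA : ∀ α, MeasurableSet (A α)) (hanti : Antitone A)
    (hA0 : A 0 = Set.univ)
    (hpos : ∀ α : NNRat, ∀ E : Set U, MeasurableSet E → E ⊆ A α →
      ((α : ℝ≥0) : ENNReal) * ν E ≤ μ E)
    (hneg : ∀ α : NNRat, ∀ E : Set U, MeasurableSet E → E ⊆ (A α)ᶜ →
      μ E ≤ ((α : ℝ≥0) : ENNReal) * ν E) :
    (∀ S : Set U, MeasurableSet S → ν S = 0 → μ S = 0) ↔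
    Tendsto (fun α : NNRat => max (μ (A α)) (ν (A α))) atTop (nhds 0) := by
  have hcast : ∀ m n : NNRat, m ≤ n → ((m : ℝ≥0) : ℝ≥0∞) ≤ ((n : ℝ≥0) : ℝ≥0∞) := by
    intro m n h
    exact_mod_cast h
  have nu_lim : Tendsto (fun α : NNRat => ν (A α)) atTop (nhds 0) := by
    rw [ENNReal.tendsto_nhds_zero]
    intro ε hε
    obtain ⟨n, hn⟩ := ENNReal.exists_nat_gt (ENNReal.div_lt_top (measure_ne_top μ _) hε.ne').ne
    have hn1 : 1 ≤ n := by
      rcases Nat.eq_zero_or_pos n with h | h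
      · simp [h] at hn
      · exact h
    filter_upwards [eventually_ge_atTop ((n : NNRat))] with α hα
    have hα0 : ((α : ℝ≥0) : ℝ≥0∞) ≠ 0 := by
      have : (1 : NNRat) ≤ α := le_trans (by exact_mod_cast hn1) hα
      have := hcast 1 α this
      simp only [NNRat.cast_one, ENNReal.coe_one] at this
      exact fun h => by simp [h] at this
    have key : ((α : ℝ≥0) : ℝ≥0∞) * ν (A α) ≤ ((α : ℝ≥0) : ℝ≥0∞) * ε := by
      calc ((α : ℝ≥0) : ℝ≥0∞) * ν (A α) ≤ μ (A α) := hpos α (A α) (hA α) subset_rfl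
        _ ≤ μ Set.univ := measure_mono (subset_univ _)
        _ ≤ (n : ℝ≥0∞) * ε := by
            have hn0 : (n : ℝ≥0∞) ≠ 0 := by exact_mod_cast Nat.one_le_iff_ne_zero.1 hn1
            exact ((ENNReal.div_lt_iff (Or.inl hε.ne') (Or.inr (measure_ne_top μ _))).1 hn).le
        _ ≤ ((α : ℝ≥0) : ℝ≥0∞) * ε := by
            gcongr
            calc (n : ℝ≥0∞) = (((n : NNRat) : ℝ≥0) : ℝ≥0∞) := by push_cast; ring
              _ ≤ _ := hcast _ _ hα
    exact (ENNReal.mul_le_mul_iff_right hα0 ENNReal.coe_ne_top).1 key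
  have hantiN : Antitone fun n : ℕ => A (n : NNRat) := fun m n h => hanti (by exact_mod_cast h)
  have mu_limN : Tendsto (fun n : ℕ => μ (A (n : NNRat))) atTop
      (nhds (μ (⋂ n : ℕ, A (n : NNRat)))) :=
    tendsto_measure_iInter_atTop (fun n => (hA _).nullMeasurableSet) hantiN ⟨0, measure_ne_top μ _⟩
  constructor
  · intro habs
    have hνN : ν (⋂ n : ℕ, A (n : NNRat)) = 0 := by
      refine le_antisymm ?_ zero_le
      refine ge_of_tendsto' (nu_lim.comp (tendsto_natCast_atTop_atTop (R := NNRat))) ?_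
      intro n
      exact measure_mono (iInter_subset _ n)
    have hμN : μ (⋂ n : ℕ, A (n : NNRat)) = 0 :=
      habs _ (MeasurableSet.iInter fun n => hA _) hνN
    rw [hμN] at mu_limN
    have mu_lim : Tendsto (fun α : NNRat => μ (A α)) atTop (nhds 0) := by
      rw [ENNReal.tendsto_nhds_zero]
      intro ε hε
      obtain ⟨n, hn⟩ := ((ENNReal.tendsto_nhds_zero.1 mu_limN ε hε).and
        (eventually_ge_atTop 0)).exists
      filter_upwards [eventually_ge_atTop ((n : NNRat))] with α hα
      exact le_trans (measure_mono (hanti hα)) hn.1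
    simpa using mu_lim.max nu_lim
  · intro h S hS hνS
    have hle : ∀ α : NNRat, μ S ≤ max (μ (A α)) (ν (A α)) := by
      intro α
      have h1 : μ (S ∩ A α) + μ (S \ A α) = μ S := measure_inter_add_diff S (hA α)
      have h2 : μ (S \ A α) ≤ ((α : ℝ≥0) : ℝ≥0∞) * ν (S \ A α) :=
        hneg α _ (hS.diff (hA α)) fun x hx => hx.2
      have h3 : ν (S \ A α) = 0 :=
        le_antisymm (le_trans (measure_mono Set.diff_subset) hνS.le) zero_le
      rw [h3, mul_zero] at h2
      calc μ S = μ (S ∩ A α) + μ (S \ A α) := h1.symm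
        _ ≤ μ (A α) + 0 := add_le_add (measure_mono inter_subset_right) h2
        _ ≤ max (μ (A α)) (ν (A α)) := by simp
    refine le_antisymm ?_ zero_le
    exact ge_of_tendsto' h hle
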